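/- In the ring R₀ = x·ℚ[x] + ℤ, an element is irreducible if and only if it is ±p for a prime number p, or it is a non-constant polynomial irreducible over ℚ whose constant coefficient is ±1. -/

import Mathlib

open Polynomial
noncomputable def R0 : Subring (Polynomial ℚ) :=
  Subring.comap (Polynomial.evalRingHom (0 : ℚ)) ⊥

lemma mem_R0_iff {f : Polynomial ℚ} : f ∈ R0 ↔ ∃ n : ℤ, f.coeff 0 = (n : ℚ) := by
  simp only [R0, Subring.mem_comap, Subring.mem_bot, coe_evalRingHom, ← coeff_zero_eq_eval_zero]
  exact ⟨fun ⟨n, h⟩ => ⟨n, h.symm⟩, fun ⟨n, h⟩ => ⟨n, h.symm⟩⟩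

lemma isUnit_R0_iff {u : R0} : IsUnit u ↔ ((u : Polynomial ℚ) = 1 ∨ (u : Polynomial ℚ) = -1) := by
  constructor
  · intro h
    obtain ⟨v, hv⟩ := h.exists_right_inv
    have hv' : (u : Polynomial ℚ) * (v : Polynomial ℚ) = 1 := by
      exact_mod_cast congrArg Subtype.val hv
    obtain ⟨c, hc, hcu⟩ := Polynomial.isUnit_iff.mp (IsUnit.of_mul_eq_one _ hv')
    obtain ⟨m, hm⟩ := mem_R0_iff.mp u.2
    obtain ⟨k, hk⟩ := mem_R0_iff.mp v.2
    have hc0 : c = (m : ℚ) := by rw [← hm, ← hcu, coeff_C]; simp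
    have h0 : (u : Polynomial ℚ).coeff 0 * (v : Polynomial ℚ).coeff 0 = 1 := by
      rw [← mul_coeff_zero, hv', coeff_one]; simp
    rw [hm, hk] at h0
    have hmk : m * k = 1 := by exact_mod_cast h0
    have hm1 : m = 1 ∨ m = -1 := Int.isUnit_iff.mp (IsUnit.of_mul_eq_one _ hmk)
    have huC : (u : Polynomial ℚ) = C (m : ℚ) := by rw [← hcu, hc0]
    rcases hm1 with h1 | h1 <;> rw [h1] at huC <;> [left; right] <;> simp [huC]
  · rintro (h | h)
    · have : u = 1 := Subtype.ext (by simpa using h)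
      exact this ▸ isUnit_one
    · have : u = -1 := Subtype.ext (by simpa using h)
      exact this ▸ isUnit_one.neg

lemma not_isUnit_of_deg {u : R0} (h : 0 < (u : Polynomial ℚ).natDegree) : ¬ IsUnit u := by
  rw [isUnit_R0_iff]
  rintro (h1 | h1) <;> rw [h1] at h <;> simp at h

lemma not_isUnit_of_coeff {u : R0} (h1 : (u : Polynomial ℚ).coeff 0 ≠ 1)
    (h2 : (u : Polynomial ℚ).coeff 0 ≠ -1) : ¬ IsUnit u := by
  rw [isUnit_R0_iff]
  rintro (h | h) <;> rw [h] at h1 h2 <;> simp at h1 h2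

theorem R0_irreducible_characterization (g : R0) :
    Irreducible g ↔
      (∃ p : ℕ, p.Prime ∧ ((g : Polynomial ℚ) = C (p : ℚ) ∨ (g : Polynomial ℚ) = -C (p : ℚ))) ∨
      (0 < (g : Polynomial ℚ).natDegree ∧ Irreducible (g : Polynomial ℚ) ∧
        ((g : Polynomial ℚ).coeff 0 = 1 ∨ (g : Polynomial ℚ).coeff 0 = -1)) := by
  constructor
  · intro hg
    obtain ⟨n, hn⟩ := mem_R0_iff.mp g.2
    have hgne : (g : Polynomial ℚ) ≠ 0 := by
      intro h
      exact hg.ne_zero (Subtype.ext (by simpa using h))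
    by_cases hn0 : n = 0
    -- case coeff 0 = 0 : contradiction
    · exfalso
      rw [hn0, Int.cast_zero] at hn
      obtain ⟨h, hf⟩ := X_dvd_iff.mpr hn
      set c : ℚ := h.coeff 0 with hc
      have hdc : (c.den : ℚ) * c = (c.num : ℚ) := by
        rw [mul_comm]; exact_mod_cast Rat.mul_den_eq_num c
      have hdpos : (0 : ℚ) < (c.den : ℚ) := by exact_mod_cast c.pos
      have hamem : (C ((1 : ℚ)/(2 * c.den)) * X) ∈ R0 := mem_R0_iff.mpr ⟨0, by simp⟩
      have hbco : (C ((2 * c.den : ℤ) : ℚ) * h).coeff 0 = ((2 * c.num : ℤ) : ℚ) := by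
        rw [mul_coeff_zero, coeff_C]
        push_cast
        simp only [if_pos rfl, ← hc]
        linear_combination 2 * hdc
      have hbmem : (C ((2 * c.den : ℤ) : ℚ) * h) ∈ R0 := mem_R0_iff.mpr ⟨2 * c.num, hbco⟩
      have heq : g = (⟨_, hamem⟩ : R0) * ⟨_, hbmem⟩ := by
        apply Subtype.ext
        show (g : Polynomial ℚ) = (C ((1 : ℚ)/(2 * c.den)) * X) * (C ((2 * c.den : ℤ) : ℚ) * h)
        rw [hf]
        have h2d : ((2 * c.den : ℤ) : ℚ) = 2 * (c.den : ℚ) := by push_cast; ring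
        rw [h2d, show (C ((1 : ℚ)/(2 * (c.den:ℚ))) * X) * (C (2 * (c.den:ℚ)) * h)
              = (C ((1 : ℚ)/(2 * (c.den:ℚ))) * C (2 * (c.den:ℚ))) * (X * h) by ring,
           ← C_mul, one_div, inv_mul_cancel₀ (by positivity : (2 * (c.den:ℚ)) ≠ 0), C_1, one_mul]
      rcases hg.isUnit_or_isUnit heq with hu | hu
      · refine not_isUnit_of_coeff ?_ ?_ hu <;> simp
      · refine not_isUnit_of_coeff ?_ ?_ hu <;>
          rw [show ((⟨_, hbmem⟩ : R0) : Polynomial ℚ) = C ((2 * c.den : ℤ) : ℚ) * h from rfl, hbco]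
        · intro hh
          have : (2 * c.num : ℤ) = 1 := by exact_mod_cast hh
          omega
        · intro hh
          have : ((2 * c.num : ℤ) : ℚ) = ((-1 : ℤ) : ℚ) := by rw [hh]; norm_num
          have : (2 * c.num : ℤ) = -1 := by exact_mod_cast this
          omega
    by_cases hdeg : (g : Polynomial ℚ).natDegree = 0
    -- constant case
    · left
      have hfC : (g : Polynomial ℚ) = C ((n : ℤ) : ℚ) := by
        rw [← hn]; exact eq_C_of_natDegree_eq_zero hdeg
      have hirr : Irreducible (n : ℤ) := by
        constructor
        · intro hu
          rcases Int.isUnit_iff.mp hu with h1 | h1 <;>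
            exact hg.not_isUnit (isUnit_R0_iff.mpr (by rw [hfC, h1]; norm_num))
        · intro s t hst
          have hsm : (C ((s : ℤ) : ℚ)) ∈ R0 := mem_R0_iff.mpr ⟨s, by simp⟩
          have htm : (C ((t : ℤ) : ℚ)) ∈ R0 := mem_R0_iff.mpr ⟨t, by simp⟩
          have heq : g = (⟨_, hsm⟩ : R0) * ⟨_, htm⟩ := by
            apply Subtype.ext
            show (g : Polynomial ℚ) = C ((s : ℤ) : ℚ) * C ((t : ℤ) : ℚ)
            rw [hfC, hst, ← C_mul]
            push_cast
            ring_nf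
          rcases hg.isUnit_or_isUnit heq with hu | hu <;>
            rcases isUnit_R0_iff.mp hu with h1 | h1 <;>
            simp only at h1
          · left
            have h2 : ((s : ℤ) : ℚ) = 1 := by
              have := congrArg (fun p => Polynomial.coeff p 0) h1; simpa using this
            exact Int.isUnit_iff.mpr (Or.inl (by exact_mod_cast h2))
          · left
            have h2 : ((s : ℤ) : ℚ) = -1 := by
              have := congrArg (fun p => Polynomial.coeff p 0) h1; simpa using this
            exact Int.isUnit_iff.mpr (Or.inr (by exact_mod_cast h2))
          · right
            have h2 : ((t : ℤ) : ℚ) = 1 := by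
              have := congrArg (fun p => Polynomial.coeff p 0) h1; simpa using this
            exact Int.isUnit_iff.mpr (Or.inl (by exact_mod_cast h2))
          · right
            have h2 : ((t : ℤ) : ℚ) = -1 := by
              have := congrArg (fun p => Polynomial.coeff p 0) h1; simpa using this
            exact Int.isUnit_iff.mpr (Or.inr (by exact_mod_cast h2))
      refine ⟨n.natAbs, Int.prime_iff_natAbs_prime.mp hirr.prime, ?_⟩
      rcases Int.natAbs_eq n with h | h
      · left; rw [hfC]
        refine congrArg C ?_
        rw [Nat.cast_natAbs]
        have h3 : n = |n| := h.trans (Int.abs_eq_natAbs n).symm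
        exact_mod_cast congrArg (fun z : ℤ => (z : ℚ)) h3
      · right; rw [hfC, ← C_neg]
        refine congrArg C ?_
        rw [Nat.cast_natAbs]
        have h3 : n = -|n| := h.trans (by rw [Int.abs_eq_natAbs])
        exact_mod_cast congrArg (fun z : ℤ => (z : ℚ)) h3
    -- nonconstant case
    · right
      have hdeg' : 0 < (g : Polynomial ℚ).natDegree := Nat.pos_of_ne_zero hdeg
      refine ⟨hdeg', ?_, ?_⟩
      · -- irreducible over ℚ
        constructor
        · exact not_isUnit_of_natDegree_pos _ hdeg'
        · intro a b hab
          by_contra hcon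
          push_neg at hcon
          obtain ⟨hua, hub⟩ := hcon
          have ha0 : a.coeff 0 ≠ 0 := by
            intro h0
            have h1 : (g : Polynomial ℚ).coeff 0 = 0 := by rw [hab, mul_coeff_zero, h0, zero_mul]
            rw [hn] at h1
            exact hn0 (by exact_mod_cast h1)
          have hAm : (C (a.coeff 0)⁻¹ * a) ∈ R0 := mem_R0_iff.mpr ⟨1, by
            rw [mul_coeff_zero, coeff_C]; simp [inv_mul_cancel₀ ha0]⟩
          have hBm : (C (a.coeff 0) * b) ∈ R0 := mem_R0_iff.mpr ⟨n, by
            rw [mul_coeff_zero, coeff_C, ← hn, hab, mul_coeff_zero]; simp⟩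
          have heq : g = (⟨_, hAm⟩ : R0) * ⟨_, hBm⟩ := by
            apply Subtype.ext
            show (g : Polynomial ℚ) = (C (a.coeff 0)⁻¹ * a) * (C (a.coeff 0) * b)
            rw [hab, show (C (a.coeff 0)⁻¹ * a) * (C (a.coeff 0) * b)
                  = (C (a.coeff 0)⁻¹ * C (a.coeff 0)) * (a * b) by ring,
               ← C_mul, inv_mul_cancel₀ ha0, C_1, one_mul]
          rcases hg.isUnit_or_isUnit heq with hu | hu <;>
            rcases isUnit_R0_iff.mp hu with h1 | h1 <;>
            simp only at h1
          · exact hua (isUnit_of_mul_isUnit_right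
              (show IsUnit (C (a.coeff 0)⁻¹ * a) by rw [h1]; exact isUnit_one))
          · exact hua (isUnit_of_mul_isUnit_right
              (show IsUnit (C (a.coeff 0)⁻¹ * a) by rw [h1]; exact isUnit_one.neg))
          · exact hub (isUnit_of_mul_isUnit_right
              (show IsUnit (C (a.coeff 0) * b) by rw [h1]; exact isUnit_one))
          · exact hub (isUnit_of_mul_isUnit_right
              (show IsUnit (C (a.coeff 0) * b) by rw [h1]; exact isUnit_one.neg))
      · -- coeff 0 = ±1
        by_contra hcon
        push_neg at hcon
        obtain ⟨h1, h2⟩ := hcon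
        have hn1 : n ≠ 1 := fun h => h1 (by rw [hn, h]; norm_num)
        have hn2 : n ≠ -1 := fun h => h2 (by rw [hn, h]; norm_num)
        have hnQ : ((n : ℤ) : ℚ) ≠ 0 := by exact_mod_cast hn0
        have hAm : (C ((n : ℤ) : ℚ)) ∈ R0 := mem_R0_iff.mpr ⟨n, by simp⟩
        have hBm : (C ((n : ℤ) : ℚ)⁻¹ * (g : Polynomial ℚ)) ∈ R0 := mem_R0_iff.mpr ⟨1, by
          rw [mul_coeff_zero, coeff_C, hn]; simp [inv_mul_cancel₀ hnQ]⟩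
        have heq : g = (⟨_, hAm⟩ : R0) * ⟨_, hBm⟩ := by
          apply Subtype.ext
          show (g : Polynomial ℚ) = C ((n : ℤ) : ℚ) * (C ((n : ℤ) : ℚ)⁻¹ * (g : Polynomial ℚ))
          rw [← mul_assoc, ← C_mul, mul_inv_cancel₀ hnQ, C_1, one_mul]
        rcases hg.isUnit_or_isUnit heq with hu | hu
        · have hAco : ((⟨_, hAm⟩ : R0) : Polynomial ℚ).coeff 0 = ((n : ℤ) : ℚ) := by
            show (C ((n : ℤ) : ℚ)).coeff 0 = _
            simp
          refine not_isUnit_of_coeff ?_ ?_ hu <;> rw [hAco]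
          · intro hh; exact hn1 (by exact_mod_cast hh)
          · intro hh
            have h3 : ((n : ℤ) : ℚ) = ((-1 : ℤ) : ℚ) := by rw [hh]; norm_num
            exact hn2 (by exact_mod_cast h3)
        · refine not_isUnit_of_deg ?_ hu
          show 0 < (C ((n : ℤ) : ℚ)⁻¹ * (g : Polynomial ℚ)).natDegree
          rwa [natDegree_C_mul (by simpa using hnQ)]
  · rintro (⟨p, hp, hgp⟩ | ⟨hdeg, hirr, hc⟩)
    · -- prime constant case
      have hppos : (0 : ℚ) < (p : ℚ) := by exact_mod_cast hp.pos
      have hp1 : (p : ℚ) ≠ 1 := by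
        intro h
        have h2 : p = 1 := by exact_mod_cast h
        exact hp.one_lt.ne' h2
      have hco : (g : Polynomial ℚ).coeff 0 = (p : ℚ) ∨ (g : Polynomial ℚ).coeff 0 = -(p : ℚ) := by
        rcases hgp with h | h <;> rw [h] <;> [left; right] <;> simp
      have hgco0 : (g : Polynomial ℚ).coeff 0 ≠ 0 := by
        rcases hco with h | h <;> rw [h] <;> intro hh <;> linarith
      constructor
      · refine not_isUnit_of_coeff ?_ ?_ <;> rcases hco with h | h <;> rw [h]
        · exact hp1
        · intro hh; linarith
        · intro hh; linarith
        · intro hh; exact hp1 (by linarith)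
      · intro a b hab
        have hab' : (a : Polynomial ℚ) * b = (g : Polynomial ℚ) := by
          exact_mod_cast (congrArg Subtype.val hab).symm
        have hgdeg : (g : Polynomial ℚ).natDegree = 0 := by
          rcases hgp with h | h <;> rw [h] <;> simp
        have hane : (a : Polynomial ℚ) ≠ 0 := by
          intro h0
          apply hgco0
          rw [← hab', h0, zero_mul, coeff_zero]
        have hbne : (b : Polynomial ℚ) ≠ 0 := by
          intro h0
          apply hgco0
          rw [← hab', h0, mul_zero, coeff_zero]
        have hdegs : (a : Polynomial ℚ).natDegree = 0 ∧ (b : Polynomial ℚ).natDegree = 0 := by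
          have := natDegree_mul hane hbne
          rw [hab', hgdeg] at this
          omega
        obtain ⟨m, hm⟩ := mem_R0_iff.mp a.2
        obtain ⟨k, hk⟩ := mem_R0_iff.mp b.2
        have h0 : ((m * k : ℤ) : ℚ) = (g : Polynomial ℚ).coeff 0 := by
          rw [← hab', mul_coeff_zero, hm, hk]; push_cast; ring
        have hmk : m * k = (p : ℤ) ∨ m * k = -(p : ℤ) := by
          rcases hco with h | h <;> rw [h] at h0 <;> [left; right] <;> exact_mod_cast h0
        have habs : m.natAbs * k.natAbs = p := by
          rcases hmk with h | h <;>
            · have := congrArg Int.natAbs h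
              simpa [Int.natAbs_mul] using this
        have hone : m.natAbs = 1 ∨ k.natAbs = 1 := by
          rcases hp.eq_one_or_self_of_dvd m.natAbs ⟨k.natAbs, habs.symm⟩ with h | h
          · exact Or.inl h
          · right
            have h2 : p * k.natAbs = p := by
              calc p * k.natAbs = m.natAbs * k.natAbs := by rw [h]
                _ = p := habs
            exact Nat.eq_of_mul_eq_mul_left hp.pos (by rw [mul_one]; exact h2)
        rcases hone with h | h
        · left
          apply isUnit_R0_iff.mpr
          have haC : (a : Polynomial ℚ) = C ((m : ℤ) : ℚ) := by
            rw [← hm]; exact eq_C_of_natDegree_eq_zero hdegs.1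
          rcases Int.natAbs_eq_iff.mp h with h' | h' <;>
            rw [haC, h'] <;> [left; right] <;> norm_num
        · right
          apply isUnit_R0_iff.mpr
          have hbC : (b : Polynomial ℚ) = C ((k : ℤ) : ℚ) := by
            rw [← hk]; exact eq_C_of_natDegree_eq_zero hdegs.2
          rcases Int.natAbs_eq_iff.mp h with h' | h' <;>
            rw [hbC, h'] <;> [left; right] <;> norm_num
    · -- irreducible nonconstant case
      constructor
      · exact not_isUnit_of_deg hdeg
      · intro a b hab
        have hab' : (g : Polynomial ℚ) = (a : Polynomial ℚ) * b := by
          exact_mod_cast congrArg Subtype.val hab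
        obtain ⟨m, hm⟩ := mem_R0_iff.mp a.2
        obtain ⟨k, hk⟩ := mem_R0_iff.mp b.2
        have hmk : ((m : ℤ) : ℚ) * k = (g : Polynomial ℚ).coeff 0 := by
          rw [hab', mul_coeff_zero, hm, hk]
        have hmk' : m * k = 1 ∨ m * k = -1 := by
          rcases hc with h | h <;> rw [h] at hmk <;> [left; right] <;> exact_mod_cast hmk
        have hmu : IsUnit m := by
          rcases hmk' with h | h
          · exact IsUnit.of_mul_eq_one _ h
          · exact IsUnit.of_mul_eq_one (a := m) (-k) (by linarith)
        have hku : IsUnit k := by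
          rcases hmk' with h | h
          · exact IsUnit.of_mul_eq_one (a := k) m (by linarith)
          · exact IsUnit.of_mul_eq_one (a := k) (-m) (by linarith)
        rcases hirr.isUnit_or_isUnit hab' with hu | hu
        · left
          apply isUnit_R0_iff.mpr
          obtain ⟨c, hcu, hcC⟩ := Polynomial.isUnit_iff.mp hu
          have hcm : c = ((m : ℤ) : ℚ) := by rw [← hm, ← hcC, coeff_C]; simp
          rcases Int.isUnit_iff.mp hmu with h' | h' <;>
            rw [← hcC, hcm, h'] <;> [left; right] <;> norm_num
        · right
          apply isUnit_R0_iff.mpr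
          obtain ⟨c, hcu, hcC⟩ := Polynomial.isUnit_iff.mp hu
          have hck : c = ((k : ℤ) : ℚ) := by rw [← hk, ← hcC, coeff_C]; simp
          rcases Int.isUnit_iff.mp hku with h' | h' <;>
            rw [← hcC, hck, h'] <;> [left; right] <;> norm_num
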